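/- Let W ∈ ℝ^{n×n} and m, L > 0 satisfy (I − W) ⪰ mI and ‖I − W‖₂ ≤ L (operator 2-norm), let σ : ℝⁿ → ℝⁿ be 1-Lipschitz (in the Euclidean norm), let c ∈ ℝⁿ, and let 0 < α < 2m/L². Then the map T(z) = σ((1 − α)z + α(W z + c)) is Lipschitz with constant κ = √(1 − 2αm + α²L²) < 1; consequently T has a unique fixed point z⋆ and the iterates z^{k+1} = T(z^k) satisfy ‖z^k − z⋆‖₂ ≤ κ^k ‖z⁰ − z⋆‖₂ for every starting point z⁰, i.e., the damped forward-backward iteration converges linearly to the unique equilibrium. -/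

import Mathlib

open Matrix

/-- **Linear convergence of damped forward-backward iteration.**
If `I - W ⪰ mI`, `‖I - W‖₂ ≤ L`, `σ` is 1-Lipschitz, and `0 < α < 2m/L²`, then
`T(z) = σ((1-α)z + α(Wz + c))` is a contraction with constant
`κ = √(1 - 2αm + α²L²) < 1`; hence it has a unique fixed point `z⋆` and the iterates
converge linearly: `‖z^k - z⋆‖ ≤ κ^k ‖z⁰ - z⋆‖`. -/
theorem forward_backward_linear_convergence (n : ℕ)
    (W : Matrix (Fin n) (Fin n) ℝ) (m L : ℝ) (hm : 0 < m) (hL : 0 < L)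
    (hmono : ((1/2 : ℝ) • ((1 - W) + (1 - W)ᵀ) -
        m • (1 : Matrix (Fin n) (Fin n) ℝ)).PosSemidef)
    (hLip : ∀ z : EuclideanSpace ℝ (Fin n), ‖Matrix.toEuclideanLin (1 - W) z‖ ≤ L * ‖z‖)
    (σ : EuclideanSpace ℝ (Fin n) → EuclideanSpace ℝ (Fin n)) (hσ : LipschitzWith 1 σ)
    (c : EuclideanSpace ℝ (Fin n)) (α : ℝ) (hα0 : 0 < α) (hα : α < 2 * m / L^2)
    (T : EuclideanSpace ℝ (Fin n) → EuclideanSpace ℝ (Fin n))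
    (hT : ∀ z, T z = σ ((1 - α) • z + α • (Matrix.toEuclideanLin W z + c)))
    (κ : ℝ) (hκ : κ = Real.sqrt (1 - 2*α*m + α^2 * L^2)) :
    κ < 1 ∧
    (∀ z₁ z₂ : EuclideanSpace ℝ (Fin n), dist (T z₁) (T z₂) ≤ κ * dist z₁ z₂) ∧
    ∃ zs : EuclideanSpace ℝ (Fin n), T zs = zs ∧ (∀ z', T z' = z' → z' = zs) ∧
      ∀ (z₀ : EuclideanSpace ℝ (Fin n)) (k : ℕ),
        dist (T^[k] z₀) zs ≤ κ ^ k * dist z₀ zs := by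
  have hκ0 : 0 ≤ κ := hκ ▸ Real.sqrt_nonneg _
  -- radicand < 1
  have hrad : 1 - 2*α*m + α^2 * L^2 < 1 := by
    have h2 : α * L^2 < 2 * m := (lt_div_iff₀ (by positivity)).mp hα
    nlinarith
  have hκ1 : κ < 1 := by
    rw [hκ]
    exact (Real.sqrt_lt' one_pos).mpr (by simpa using hrad)
  -- lower bound on quadratic form
  set A := Matrix.toEuclideanLin (1 - W) with hA
  have hinner : ∀ u : EuclideanSpace ℝ (Fin n), m * ‖u‖^2 ≤ inner ℝ u (A u) := by
    intro u
    have h := hmono.dotProduct_mulVec_nonneg ((WithLp.equiv 2 (Fin n → ℝ)) u)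
    set v := (WithLp.equiv 2 (Fin n → ℝ)) u with hv
    have hsym : v ⬝ᵥ ((1 - W)ᵀ *ᵥ v) = v ⬝ᵥ ((1 - W) *ᵥ v) := by
      rw [Matrix.mulVec_transpose, Matrix.dotProduct_mulVec]
      exact dotProduct_comm _ _
    simp only [Matrix.sub_mulVec, Matrix.smul_mulVec, Matrix.add_mulVec,
      Matrix.one_mulVec, dotProduct_sub, dotProduct_smul, dotProduct_add,
      star_trivial, smul_eq_mul] at h
    rw [hsym] at h
    have hexp2 : v ⬝ᵥ ((1 - W) *ᵥ v) = v ⬝ᵥ v - v ⬝ᵥ (W *ᵥ v) := by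
      simp [Matrix.sub_mulVec, Matrix.one_mulVec]
    rw [hexp2] at h
    have hip : (inner ℝ u (A u) : ℝ) = v ⬝ᵥ ((1 - W) *ᵥ v) := by
      simp only [hA, PiLp.inner_apply, RCLike.inner_apply, starRingEnd_apply, star_trivial,
        dotProduct]
      exact Finset.sum_congr rfl fun i _ => mul_comm _ _
    have hnorm : (‖u‖:ℝ)^2 = v ⬝ᵥ v := by
      rw [← real_inner_self_eq_norm_sq]
      simp only [PiLp.inner_apply, RCLike.inner_apply, starRingEnd_apply, star_trivial,
        dotProduct]
      rfl
    rw [hip, hnorm, hexp2]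
    linarith
  -- key contraction estimate
  have hkey : ∀ u : EuclideanSpace ℝ (Fin n), ‖u - α • A u‖ ≤ κ * ‖u‖ := by
    intro u
    have hAu := hLip u
    have hiu := hinner u
    have hsq : ‖u - α • A u‖^2 ≤ (1 - 2*α*m + α^2 * L^2) * ‖u‖^2 := by
      have hexp : ‖u - α • A u‖^2 = ‖u‖^2 - 2 * (α * inner ℝ u (A u)) + α^2 * ‖A u‖^2 := by
        rw [norm_sub_sq_real, real_inner_smul_right, norm_smul, mul_pow, Real.norm_eq_abs, sq_abs]
      rw [hexp]
      have hAu2 : ‖A u‖^2 ≤ L^2 * ‖u‖^2 := by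
        have := mul_self_le_mul_self (norm_nonneg (A u)) hAu
        nlinarith [norm_nonneg u, norm_nonneg (A u)]
      nlinarith
    rcases le_or_gt 0 (1 - 2*α*m + α^2 * L^2) with h | h
    · have hsq' : ‖u - α • A u‖^2 ≤ (κ * ‖u‖)^2 := by
        rw [hκ, mul_pow, Real.sq_sqrt h]; exact hsq
      calc ‖u - α • A u‖ = Real.sqrt (‖u - α • A u‖^2) :=
            (Real.sqrt_sq (norm_nonneg _)).symm
        _ ≤ Real.sqrt ((κ * ‖u‖)^2) := Real.sqrt_le_sqrt hsq'
        _ = κ * ‖u‖ := Real.sqrt_sq (by positivity)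
    · have h0 : ‖u - α • A u‖^2 ≤ 0 := hsq.trans (by nlinarith [sq_nonneg ‖u‖, norm_nonneg u])
      have : ‖u - α • A u‖ = 0 := by nlinarith [norm_nonneg (u - α • A u)]
      rw [this]; positivity
  -- Lipschitz bound for T
  have hTlip : ∀ z₁ z₂ : EuclideanSpace ℝ (Fin n), dist (T z₁) (T z₂) ≤ κ * dist z₁ z₂ := by
    intro z₁ z₂
    rw [hT z₁, hT z₂]
    calc dist (σ ((1 - α) • z₁ + α • (Matrix.toEuclideanLin W z₁ + c)))
            (σ ((1 - α) • z₂ + α • (Matrix.toEuclideanLin W z₂ + c)))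
        ≤ 1 * dist ((1 - α) • z₁ + α • (Matrix.toEuclideanLin W z₁ + c))
            ((1 - α) • z₂ + α • (Matrix.toEuclideanLin W z₂ + c)) := by
          simpa using hσ.dist_le_mul _ _
      _ ≤ κ * dist z₁ z₂ := by
          rw [one_mul, dist_eq_norm, dist_eq_norm]
          have harg : ((1 - α) • z₁ + α • (Matrix.toEuclideanLin W z₁ + c)) -
              ((1 - α) • z₂ + α • (Matrix.toEuclideanLin W z₂ + c)) =
              (z₁ - z₂) - α • A (z₁ - z₂) := by
            have hA12 : A (z₁ - z₂) = (z₁ - z₂) - Matrix.toEuclideanLin W (z₁ - z₂) := by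
              have hsub := map_sub (Matrix.toEuclideanLin (𝕜 := ℝ) (m := Fin n) (n := Fin n))
                (1 : Matrix (Fin n) (Fin n) ℝ) W
              rw [hA, hsub, LinearMap.sub_apply]
              congr 1
              rw [Matrix.toEuclideanLin_apply, Matrix.one_mulVec]
            rw [hA12, map_sub]
            module
          rw [harg]
          exact hkey (z₁ - z₂)
  refine ⟨hκ1, hTlip, ?_⟩
  -- contraction, fixed point
  set K : NNReal := ⟨κ, hκ0⟩ with hK
  have hcontr : ContractingWith K T := by
    constructor
    · exact_mod_cast hκ1
    · exact LipschitzWith.of_dist_le_mul (fun x y => hTlip x y)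
  have : Nonempty (EuclideanSpace ℝ (Fin n)) := ⟨0⟩
  refine ⟨hcontr.fixedPoint T, hcontr.fixedPoint_isFixedPt, ?_, ?_⟩
  · intro z' hz'
    exact hcontr.fixedPoint_unique hz'
  · intro z₀ k
    induction k with
    | zero => simp
    | succ k ih =>
      have : T^[k+1] z₀ = T (T^[k] z₀) := Function.iterate_succ_apply' T k z₀
      rw [this, pow_succ]
      calc dist (T (T^[k] z₀)) (hcontr.fixedPoint T)
          = dist (T (T^[k] z₀)) (T (hcontr.fixedPoint T)) := by
            rw [hcontr.fixedPoint_isFixedPt]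
        _ ≤ κ * dist (T^[k] z₀) (hcontr.fixedPoint T) := hTlip _ _
        _ ≤ κ * (κ ^ k * dist z₀ (hcontr.fixedPoint T)) := by
            exact mul_le_mul_of_nonneg_left ih hκ0
        _ = κ ^ k * κ * dist z₀ (hcontr.fixedPoint T) := by ring
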